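/- The game chromatic number of the rook's graph K_3 □ K_3 with Alice moving first equals 3; that is, Alice has a winning strategy in the (1,1)-colouring game on K_3 □ K_3 with 3 colours when she moves first. -/

import Mathlib

variable {V : Type*} [Fintype V] [DecidableEq V]

/-- A partial colouring with palette `Fin k` is proper if adjacent vertices never
receive the same colour. -/
def ProperPartial {k : ℕ} (G : SimpleGraph V) (c : V → Option (Fin k)) : Prop :=
  ∀ v w, G.Adj v w → ∀ x, c v = some x → c w ≠ some x

/-- The number of uncoloured vertices. -/
def uncoloured {k : ℕ} (c : V → Option (Fin k)) : ℕ :=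
  (Finset.univ.filter fun v => c v = none).card

/-- A single move: properly colour one previously uncoloured vertex. -/
def GMove {k : ℕ} (G : SimpleGraph V) (c c' : V → Option (Fin k)) : Prop :=
  ∃ v x, c v = none ∧ c' = Function.update c v (some x) ∧ ProperPartial G c'

/-- A sequence of exactly `t` single moves. -/
def GMoveSeq {k : ℕ} (G : SimpleGraph V) :
    ℕ → (V → Option (Fin k)) → (V → Option (Fin k)) → Prop
  | 0, c, c' => c' = c
  | t + 1, c, c' => ∃ c'', GMove G c c'' ∧ GMoveSeq G t c'' c'

/-- A turn of a player who must colour `min t u` vertices, where `u` is the current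
number of uncoloured vertices. -/
def GTurn {k : ℕ} (G : SimpleGraph V) (t : ℕ) (c c' : V → Option (Fin k)) : Prop :=
  GMoveSeq G (min t (uncoloured c)) c c'

/-- `AliceWins G k a b turn c`: Alice has a winning strategy in the `(a,b)`-colouring
game on `G` with `k` colours from position `c`, where `turn = true` means it is
Alice's turn and `turn = false` means it is Bob's turn. Alice wins exactly when the
whole graph eventually gets coloured. -/
inductive AliceWins (G : SimpleGraph V) (k a b : ℕ) :
    Bool → (V → Option (Fin k)) → Prop
  | done (turn : Bool) (c : V → Option (Fin k)) :
      uncoloured c = 0 → AliceWins G k a b turn c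
  | aliceTurn (c c' : V → Option (Fin k)) : 0 < uncoloured c → GTurn G a c c' →
      AliceWins G k a b false c' → AliceWins G k a b true c
  | bobTurn (c : V → Option (Fin k)) : 0 < uncoloured c →
      (∃ c', GTurn G b c c') →
      (∀ c', GTurn G b c c' → AliceWins G k a b true c') →
      AliceWins G k a b false c

/-- The everywhere-uncoloured position. -/
def emptyCol (V : Type*) (k : ℕ) : V → Option (Fin k) := fun _ => none

/-- The rook's graph `K₃ □ K₃` (the Hamming graph `H₃,₃`). -/
def rook33 : SimpleGraph (Fin 3 × Fin 3) :=
  (⊤ : SimpleGraph (Fin 3)).boxProd (⊤ : SimpleGraph (Fin 3))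

-- auxiliary development

lemma GTurn1 {k : ℕ} (G : SimpleGraph V) {c c' : V → Option (Fin k)}
    (hu : 0 < uncoloured c) : GTurn G 1 c c' ↔ GMove G c c' := by
  unfold GTurn
  rw [Nat.min_eq_left hu]
  constructor
  · rintro ⟨c'', hm, he⟩
    have : c' = c'' := he
    rwa [this]
  · intro hm
    exact ⟨c', hm, rfl⟩

lemma uncoloured_update {k : ℕ} (c : V → Option (Fin k)) (v : V) (x : Fin k)
    (hv : c v = none) :
    uncoloured (Function.update c v (some x)) = uncoloured c - 1 := by
  unfold uncoloured
  have : (Finset.univ.filter fun w => Function.update c v (some x) w = none)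
      = (Finset.univ.filter fun w => c w = none).erase v := by
    ext w
    simp only [Finset.mem_filter, Finset.mem_erase, Finset.mem_univ, true_and,
      Function.update_apply]
    by_cases h : w = v <;> simp [h]
  rw [this, Finset.card_erase_of_mem (by simp [hv])]

lemma rook33_adj_iff (v w : Fin 3 × Fin 3) :
    rook33.Adj v w ↔ ((v.1 ≠ w.1 ∧ v.2 = w.2) ∨ (v.2 ≠ w.2 ∧ v.1 = w.1)) := by
  simp [rook33, SimpleGraph.boxProd_adj, and_comm]

instance : DecidableRel rook33.Adj := fun v w =>
  decidable_of_iff _ (rook33_adj_iff v w).symm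

-- negative part
lemma no2col (c : Fin 3 × Fin 3 → Option (Fin 2)) (hp : ProperPartial rook33 c)
    (hu : uncoloured c = 0) : False := by
  have h0 : ∀ v, ∃ a, c v = some a := by
    intro v
    rcases h : c v with _ | a
    · exfalso
      have hv : v ∈ Finset.univ.filter fun w => c w = none := by simp [h]
      have := Finset.card_eq_zero.mp hu
      rw [this] at hv
      exact absurd hv (Finset.notMem_empty v)
    · exact ⟨a, rfl⟩
  obtain ⟨a, ha⟩ := h0 (0, 0)
  obtain ⟨b, hb⟩ := h0 (0, 1)
  obtain ⟨d, hd⟩ := h0 (0, 2)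
  have adj01 : rook33.Adj (0,0) (0,1) := by rw [rook33_adj_iff]; simp
  have adj02 : rook33.Adj (0,0) (0,2) := by rw [rook33_adj_iff]; simp
  have adj12 : rook33.Adj (0,1) (0,2) := by rw [rook33_adj_iff]; simp
  have h1 : b ≠ a := fun h => hp _ _ adj01 a ha (h ▸ hb)
  have h2 : d ≠ a := fun h => hp _ _ adj02 a ha (h ▸ hd)
  have h3 : d ≠ b := fun h => hp _ _ adj12 b hb (h ▸ hd)
  have : ∀ a b d : Fin 2, b ≠ a → d ≠ a → d ≠ b → False := by decide
  exact this a b d h1 h2 h3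

lemma negAll : ∀ (turn : Bool) (c : Fin 3 × Fin 3 → Option (Fin 2)),
    AliceWins rook33 2 1 1 turn c → ProperPartial rook33 c → False := by
  intro turn c h
  induction h with
  | done t c h0 => intro hp; exact no2col c hp h0
  | aliceTurn c c' hu ht _ ih =>
    intro _
    obtain ⟨v, x, _, _, hp'⟩ := (GTurn1 rook33 hu).mp ht
    exact ih hp'
  | bobTurn c hu hex hall ih =>
    intro _
    obtain ⟨c', ht⟩ := hex
    obtain ⟨v, x, _, _, hp'⟩ := (GTurn1 rook33 hu).mp ht
    exact ih c' ht hp'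

-- positive part: Nat-encoded board evaluator
abbrev Col3 := Fin 3 × Fin 3 → Option (Fin 3)

def idx (v : Fin 3 × Fin 3) : ℕ := 3 * v.1.val + v.2.val

def dig (n i : ℕ) : ℕ := n / 4 ^ i % 4

def decodeO : ℕ → Option (Fin 3)
  | 1 => some 0
  | 2 => some 1
  | 3 => some 2
  | _ => none

def toFun (n : ℕ) : Col3 := fun v => decodeO (dig n (idx v))

def verts : List (Fin 3 × Fin 3) :=
  [(0,0),(0,1),(0,2),(1,0),(1,1),(1,2),(2,0),(2,1),(2,2)]

def allMoves : List ((Fin 3 × Fin 3) × Fin 3) :=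
  verts.flatMap fun v => [(v,0),(v,1),(v,2)]

lemma mem_allMoves : ∀ m : (Fin 3 × Fin 3) × Fin 3, m ∈ allMoves := by decide

def nbrs (v : Fin 3 × Fin 3) : List (Fin 3 × Fin 3) :=
  match idx v with
  | 0 => [(0,1),(0,2),(1,0),(2,0)]
  | 1 => [(0,0),(0,2),(1,1),(2,1)]
  | 2 => [(0,0),(0,1),(1,2),(2,2)]
  | 3 => [(1,1),(1,2),(0,0),(2,0)]
  | 4 => [(1,0),(1,2),(0,1),(2,1)]
  | 5 => [(1,0),(1,1),(0,2),(2,2)]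
  | 6 => [(2,1),(2,2),(0,0),(1,0)]
  | 7 => [(2,0),(2,2),(0,1),(1,1)]
  | _ => [(2,0),(2,1),(0,2),(1,2)]

lemma mem_nbrs : ∀ v w : Fin 3 × Fin 3, w ∈ nbrs v ↔ rook33.Adj v w := by
  have h : ∀ v w : Fin 3 × Fin 3, w ∈ nbrs v ↔
      ((v.1 ≠ w.1 ∧ v.2 = w.2) ∨ (v.2 ≠ w.2 ∧ v.1 = w.1)) := by decide
  intro v w
  rw [h, ← rook33_adj_iff]

lemma idx_inj : ∀ v w : Fin 3 × Fin 3, idx v = idx w → v = w := by decide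

lemma dig_lt (n i : ℕ) : dig n i < 4 := Nat.mod_lt _ (by norm_num)

lemma decode_none {d : ℕ} (hd : d < 4) : decodeO d = none ↔ d = 0 := by
  interval_cases d <;> simp [decodeO]

lemma decode_some {d : ℕ} (hd : d < 4) (x : Fin 3) :
    decodeO d = some x ↔ d = x.val + 1 := by
  interval_cases d <;> fin_cases x <;> simp [decodeO]

lemma dig_add_same (n i c : ℕ) (hc : c < 4) (h0 : dig n i = 0) :
    dig (n + c * 4 ^ i) i = c := by
  have hm : 0 < 4 ^ i := Nat.pow_pos (by norm_num)
  unfold dig at h0 ⊢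
  rw [Nat.add_mul_div_right _ _ hm]
  omega

lemma dig_add_other (n i j c : ℕ) (hc : c < 4) (h0 : dig n i = 0) (hne : j ≠ i) :
    dig (n + c * 4 ^ i) j = dig n j := by
  have hmj : 0 < 4 ^ j := Nat.pow_pos (by norm_num)
  rcases Nat.lt_or_ge j i with hji | hij
  · -- j < i
    have hi : i = j + ((i - j - 1) + 1) := by omega
    unfold dig
    rw [hi, pow_add]
    have : c * (4 ^ j * 4 ^ (i - j - 1 + 1)) = (c * 4 ^ (i - j - 1) * 4) * 4 ^ j := by
      rw [pow_succ]; ring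
    rw [this, Nat.add_mul_div_right _ _ hmj, Nat.add_mul_mod_self_right]
  · -- i < j
    have hij' : i < j := lt_of_le_of_ne hij (Ne.symm hne)
    set q := n / 4 ^ (i + 1) with hq
    set r := n % 4 ^ (i + 1) with hr
    have hmi : 0 < 4 ^ i := Nat.pow_pos (by norm_num)
    have hmi1 : 0 < 4 ^ (i + 1) := Nat.pow_pos (by norm_num)
    have hrd : r / 4 ^ i = 0 := by
      have := Nat.mod_mul_right_div_self n (4 ^ i) 4
      rw [← pow_succ] at this
      rw [hr, this]
      exact h0
    have hrlt : r < 4 ^ i := (Nat.div_eq_zero_iff.mp hrd).resolve_left (by omega)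
    have hn : n = q * 4 ^ (i + 1) + r := by
      rw [hq, hr, mul_comm]; exact (Nat.div_add_mod n _).symm
    have hs : r + c * 4 ^ i < 4 ^ (i + 1) := by
      have h41 : (4:ℕ) ^ (i + 1) = 4 * 4 ^ i := by rw [pow_succ]; ring
      have hc3 : c * 4 ^ i ≤ 3 * 4 ^ i := Nat.mul_le_mul_right _ (by omega)
      omega
    have hdivi1 : (n + c * 4 ^ i) / 4 ^ (i + 1) = q := by
      rw [hn]
      have : q * 4 ^ (i + 1) + r + c * 4 ^ i = 4 ^ (i + 1) * q + (r + c * 4 ^ i) := by ring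
      rw [this, Nat.mul_add_div hmi1, Nat.div_eq_of_lt hs]
      omega
    have hdivn : n / 4 ^ (i + 1) = q := hq.symm
    have hj : (4:ℕ) ^ j = 4 ^ (i + 1) * 4 ^ (j - i - 1) := by
      rw [← pow_add]
      congr 1
      omega
    unfold dig
    rw [hj, ← Nat.div_div_eq_div_mul, ← Nat.div_div_eq_div_mul, hdivi1, hdivn]

lemma toFun_set (n : ℕ) (v : Fin 3 × Fin 3) (x : Fin 3) (h0 : dig n (idx v) = 0) :
    toFun (n + (x.val + 1) * 4 ^ idx v) = Function.update (toFun n) v (some x) := by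
  funext w
  rw [Function.update_apply, toFun, toFun]
  by_cases h : w = v
  · subst h
    rw [if_pos rfl, dig_add_same n (idx w) _ (by omega) h0]
    rw [decode_some (by omega)]
  · rw [if_neg h, dig_add_other n (idx v) (idx w) _ (by omega) h0
      (fun hc => h (idx_inj w v hc))]

def legalB (n : ℕ) (v : Fin 3 × Fin 3) (x : Fin 3) : Bool :=
  (dig n (idx v) == 0) && (nbrs v).all fun w => !(dig n (idx w) == x.val + 1)

def winB : ℕ → Bool → ℕ → Bool
  | 0, _, _ => true
  | f+1, true, n =>
      allMoves.any fun m => legalB n m.1 m.2 && winB f false (n + (m.2.val + 1) * 4 ^ idx m.1)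
  | f+1, false, n =>
      (allMoves.any fun m => legalB n m.1 m.2) &&
      allMoves.all fun m => !legalB n m.1 m.2 || winB f true (n + (m.2.val + 1) * 4 ^ idx m.1)

lemma legalB_iff_aux {n : ℕ} {v : Fin 3 × Fin 3} {x : Fin 3} :
    legalB n v x = true ↔
      (toFun n v = none ∧ ∀ w, rook33.Adj v w → toFun n w ≠ some x) := by
  rw [legalB, Bool.and_eq_true, List.all_eq_true]
  constructor
  · rintro ⟨h1, h2⟩
    refine ⟨by rw [toFun, decode_none (dig_lt _ _)]; exact beq_iff_eq.mp h1, ?_⟩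
    intro w hadj hc
    have := h2 w ((mem_nbrs v w).mpr hadj)
    rw [Bool.not_eq_true'] at this
    rw [toFun, decode_some (dig_lt _ _)] at hc
    exact absurd (by rw [hc]) (ne_of_beq_false this)
  · rintro ⟨h1, h2⟩
    rw [toFun, decode_none (dig_lt _ _)] at h1
    refine ⟨by rw [h1]; rfl, ?_⟩
    intro w hw
    rw [Bool.not_eq_true']
    apply beq_false_of_ne
    intro hc
    exact h2 w ((mem_nbrs v w).mp hw)
      (by rw [toFun, decode_some (dig_lt _ _)]; exact hc)

lemma legalB_sound {n : ℕ} {v : Fin 3 × Fin 3} {x : Fin 3}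
    (hp : ProperPartial rook33 (toFun n)) (h : legalB n v x = true) :
    toFun n v = none ∧ ProperPartial rook33 (Function.update (toFun n) v (some x)) := by
  obtain ⟨hnone, hkey⟩ := legalB_iff_aux.mp h
  refine ⟨hnone, ?_⟩
  intro a b hadj y hay hby
  by_cases hb : b = v
  · by_cases ha : a = v
    · rw [ha, hb] at hadj; exact rook33.irrefl hadj
    · rw [Function.update_of_ne ha] at hay
      rw [hb, Function.update_self] at hby
      have hxy : y = x := by injection hby.symm
      have hadj2 : rook33.Adj v a := rook33.adj_symm (by rwa [hb] at hadj)
      exact hkey a hadj2 (hxy ▸ hay)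
  · rw [Function.update_of_ne hb] at hby
    by_cases ha : a = v
    · rw [ha, Function.update_self] at hay
      have hxy : y = x := by injection hay.symm
      exact hkey b (by rwa [ha] at hadj) (hxy ▸ hby)
    · rw [Function.update_of_ne ha] at hay
      exact hp a b hadj y hay hby

lemma legalB_complete {n : ℕ} {v : Fin 3 × Fin 3} {x : Fin 3}
    (hnone : toFun n v = none)
    (hp' : ProperPartial rook33 (Function.update (toFun n) v (some x))) :
    legalB n v x = true := by
  apply legalB_iff_aux.mpr
  refine ⟨hnone, ?_⟩
  intro w hadj hc
  have hwv : w ≠ v := fun h => rook33.irrefl (h ▸ hadj)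
  have := hp' v w hadj x (by rw [Function.update_self])
  rw [Function.update_of_ne hwv] at this
  exact this hc

lemma dig_zero_of_none {n : ℕ} {v : Fin 3 × Fin 3} (h : toFun n v = none) :
    dig n (idx v) = 0 := by
  rwa [toFun, decode_none (dig_lt _ _)] at h

lemma winB_sound : ∀ (f : ℕ) (turn : Bool) (n : ℕ),
    ProperPartial rook33 (toFun n) →
    uncoloured (toFun n) = f → winB f turn n = true →
    AliceWins rook33 3 1 1 turn (toFun n) := by
  intro f
  induction f with
  | zero => intro turn n _ hu _; exact AliceWins.done turn (toFun n) hu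
  | succ f ih =>
    intro turn n hp hu hw
    have hupos : 0 < uncoloured (toFun n) := hu ▸ f.succ_pos
    cases turn
    · -- Bob's turn
      rw [winB, Bool.and_eq_true] at hw
      obtain ⟨hex, hall⟩ := hw
      refine AliceWins.bobTurn (toFun n) hupos ?_ ?_
      · obtain ⟨m, _, hleg⟩ := List.any_eq_true.mp hex
        obtain ⟨hnone, hp'⟩ := legalB_sound hp hleg
        exact ⟨_, (GTurn1 rook33 hupos).mpr ⟨m.1, m.2, hnone, rfl, hp'⟩⟩
      · intro c' ht
        obtain ⟨v, x, hnone, heq, hp'⟩ := (GTurn1 rook33 hupos).mp ht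
        subst heq
        have hleg : legalB n v x = true := legalB_complete hnone hp'
        have h3 := List.all_eq_true.mp hall (v, x) (mem_allMoves _)
        rw [Bool.or_eq_true, Bool.not_eq_true'] at h3
        rcases h3 with h3 | h3
        · exact absurd hleg (by simp [h3])
        · have hset := toFun_set n v x (dig_zero_of_none hnone)
          rw [← hset] at hp' ⊢
          exact ih true _ hp'
            (by rw [hset, uncoloured_update _ v x hnone, hu]; omega) h3
    · -- Alice's turn
      rw [winB] at hw
      obtain ⟨m, _, hband⟩ := List.any_eq_true.mp hw
      rw [Bool.and_eq_true] at hband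
      obtain ⟨hleg, hwin⟩ := hband
      obtain ⟨hnone, hp'⟩ := legalB_sound hp hleg
      refine AliceWins.aliceTurn (toFun n) (Function.update (toFun n) m.1 (some m.2)) hupos
        ((GTurn1 rook33 hupos).mpr ⟨m.1, m.2, hnone, rfl, hp'⟩) ?_
      have hset := toFun_set n m.1 m.2 (dig_zero_of_none hnone)
      rw [← hset]
      exact ih false _ (by rw [hset]; exact hp')
        (by rw [hset, uncoloured_update _ m.1 m.2 hnone, hu]; omega) hwin

lemma toFun_zero : toFun 0 = emptyCol (Fin 3 × Fin 3) 3 := by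
  funext v
  simp [toFun, dig, emptyCol, Nat.zero_div, decodeO]

instance properPartialDec (c : Col3) : Decidable (ProperPartial rook33 c) := by
  unfold ProperPartial; infer_instance

set_option maxRecDepth 100000 in
set_option maxHeartbeats 2000000 in
theorem stmt13' :
    AliceWins rook33 3 1 1 true (emptyCol (Fin 3 × Fin 3) 3) := by
  rw [← toFun_zero]
  have hpos9 : 0 < uncoloured (toFun 0) := by decide
  refine AliceWins.aliceTurn _ _ hpos9
    ((GTurn1 rook33 hpos9).mpr ⟨((0:Fin 3),(0:Fin 3)), (0:Fin 3), by decide, rfl, ?_⟩) ?_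
  · rw [← toFun_set 0 (0,0) 0 (by decide)]
    decide
  rw [← toFun_set 0 (0,0) 0 (by decide)]
  have hpos8 : 0 < uncoloured (toFun (0 + ((0:Fin 3).val + 1) * 4 ^ idx (0,0))) := by decide
  refine AliceWins.bobTurn _ hpos8 ?_ ?_
  · refine ⟨_, (GTurn1 rook33 hpos8).mpr ⟨((1:Fin 3),(1:Fin 3)), (0:Fin 3), by decide, rfl, ?_⟩⟩
    rw [← toFun_set _ (1,1) 0 (by decide)]
    decide
  · intro c' ht
    obtain ⟨v, x, hnone, heq, hp'⟩ := (GTurn1 rook33 hpos8).mp ht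
    subst heq
    have hleg : legalB _ v x = true := legalB_complete hnone hp'
    obtain ⟨v1, v2⟩ := v
    fin_cases v1 <;> fin_cases v2 <;> fin_cases x <;>
      first
        | exact absurd hleg (by decide)
        | (rw [← toFun_set _ _ _ (by decide)] at hp' ⊢
           exact winB_sound 7 true _ hp' (by decide) (by decide +kernel))

/-- `χ_{g_A}(K₃ □ K₃) = 3`: Alice has a winning strategy with `3`
colours in the colouring game on `K₃ □ K₃` with Alice moving first, and none with
`2` colours (indeed `χ(K₃ □ K₃) = 3`). -/
theorem stmt13 :
    AliceWins rook33 3 1 1 true (emptyCol (Fin 3 × Fin 3) 3) ∧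
    ¬ AliceWins rook33 2 1 1 true (emptyCol (Fin 3 × Fin 3) 2) := by
  exact ⟨stmt13', fun h => negAll true _ h (fun v w _ x hx => by simp [emptyCol] at hx)⟩
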